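/- The Picard map Φv := v − (α/L²) I⁻¹(Av − F) is a contraction on H with Lipschitz constant q = (1 − α²/L²)^{1/2} < 1, i.e., ‖Φv − Φw‖ ≤ q‖v − w‖ for all v, w ∈ H. -/

import Mathlib

open InnerProductSpace

/-- The Picard map `Φ v = v - (α/L²) • I⁻¹(A v - F)` is a contraction with
Lipschitz constant `q = √(1 - α²/L²) < 1`. -/
theorem picard_contraction
    {H : Type*} [NormedAddCommGroup H] [InnerProductSpace ℝ H] [CompleteSpace H]
    (A : H → StrongDual ℝ H) (F : StrongDual ℝ H)
    (α L : ℝ) (hα : 0 < α) (hαL : α ≤ L)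
    (hmono : ∀ v w : H, α * ‖w - v‖ ^ 2 ≤ (A w - A v) (w - v))
    (hlip : ∀ v w : H, ‖A w - A v‖ ≤ L * ‖w - v‖)
    (Φ : H → H)
    (hΦ : ∀ v : H, Φ v = v - (α / L ^ 2) • (InnerProductSpace.toDual ℝ H).symm (A v - F)) :
    Real.sqrt (1 - α ^ 2 / L ^ 2) < 1 ∧
      ∀ v w : H, ‖Φ v - Φ w‖ ≤ Real.sqrt (1 - α ^ 2 / L ^ 2) * ‖v - w‖ := by
  have hL : 0 < L := lt_of_lt_of_le hα hαL
  have hL2 : 0 < L ^ 2 := by positivity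
  have hle : α ^ 2 ≤ L ^ 2 := by nlinarith
  have hq0 : 0 ≤ 1 - α ^ 2 / L ^ 2 := by
    rw [sub_nonneg, div_le_one hL2]; exact hle
  constructor
  · have h1 : 1 - α ^ 2 / L ^ 2 < 1 := by
      have : 0 < α ^ 2 / L ^ 2 := by positivity
      linarith
    calc Real.sqrt (1 - α ^ 2 / L ^ 2) < Real.sqrt 1 := Real.sqrt_lt_sqrt hq0 h1
    _ = 1 := Real.sqrt_one
  · intro v w
    set ρ : ℝ := α / L ^ 2 with hρdef
    have hρ : 0 < ρ := by positivity
    set d : H := v - w with hd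
    set T : H := (InnerProductSpace.toDual ℝ H).symm (A v - A w) with hT
    have hΦd : Φ v - Φ w = d - ρ • T := by
      rw [hΦ v, hΦ w, hT, hd]
      have h5 : (InnerProductSpace.toDual ℝ H).symm (A v - A w)
          = (InnerProductSpace.toDual ℝ H).symm (A v - F)
            - (InnerProductSpace.toDual ℝ H).symm (A w - F) := by
        rw [← map_sub]; congr 1; abel
      rw [h5, smul_sub]
      abel
    have hinner : ⟪T, d⟫_ℝ = (A v - A w) d := InnerProductSpace.toDual_symm_apply
    have hTnorm : ‖T‖ = ‖A v - A w‖ := LinearIsometryEquiv.norm_map _ _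
    have hmono' : α * ‖d‖ ^ 2 ≤ (A v - A w) d := hmono w v
    have hlipd : ‖A v - A w‖ ≤ L * ‖d‖ := hlip w v
    have hY2 : ‖A v - A w‖ ^ 2 ≤ (L * ‖d‖) ^ 2 := by
      have h0 : (0:ℝ) ≤ ‖A v - A w‖ := norm_nonneg _
      nlinarith
    have h3 : ρ ^ 2 * ‖A v - A w‖ ^ 2 ≤ ρ ^ 2 * (L * ‖d‖) ^ 2 :=
      mul_le_mul_of_nonneg_left hY2 (sq_nonneg ρ)
    have h4 : ρ * (α * ‖d‖ ^ 2) ≤ ρ * ((A v - A w) d) :=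
      mul_le_mul_of_nonneg_left hmono' hρ.le
    have he1 : ρ ^ 2 * (L * ‖d‖) ^ 2 = (α ^ 2 / L ^ 2) * ‖d‖ ^ 2 := by
      rw [hρdef]; field_simp
    have he2 : ρ * (α * ‖d‖ ^ 2) = (α ^ 2 / L ^ 2) * ‖d‖ ^ 2 := by
      rw [hρdef]; field_simp
    have hsq : ‖Φ v - Φ w‖ ^ 2 ≤ (1 - α ^ 2 / L ^ 2) * ‖d‖ ^ 2 := by
      rw [hΦd, norm_sub_sq_real]
      have hi : ⟪d, ρ • T⟫_ℝ = ρ * ((A v - A w) d) := by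
        rw [real_inner_smul_right, real_inner_comm, hinner]
      have hn : ‖ρ • T‖ ^ 2 = ρ ^ 2 * ‖A v - A w‖ ^ 2 := by
        rw [norm_smul, hTnorm, mul_pow, Real.norm_eq_abs, sq_abs]
      rw [hi, hn]
      nlinarith [h3, h4, he1, he2]
    have hfinal := Real.sqrt_le_sqrt hsq
    rwa [Real.sqrt_mul hq0, Real.sqrt_sq (norm_nonneg d),
      Real.sqrt_sq (norm_nonneg _)] at hfinal
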